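/- Let V be an oriented 2-dimensional real inner product space with rotation j by π/2, T an n-dimensional real inner product space, W an n-dimensional real inner product space, and B_v : T → W linear maps, linear in v ∈ V, satisfying ᵗB_v ∘ B_{jv} = ᵗB_{jv} ∘ B_v and ᵗB_v ∘ B_v + ᵗB_{jv} ∘ B_{jv} = Id for all unit vectors v. Then the set of unit vectors v ∈ V for which B_v fails to be a linear isomorphism is finite. -/

import Mathlib

open LinearMap

private lemma sq_sum_of_unit' {v : EuclideanSpace ℝ (Fin 2)} (hv : ‖v‖ = 1) :
    v 0 ^ 2 + v 1 ^ 2 = 1 := by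
  have h := congrArg (· ^ 2) hv
  simp only [EuclideanSpace.norm_eq, Fin.sum_univ_two, one_pow, Real.norm_eq_abs, sq_abs] at h
  rwa [Real.sq_sqrt (by positivity)] at h

private lemma decomp' {v jv : EuclideanSpace ℝ (Fin 2)} (w : EuclideanSpace ℝ (Fin 2))
    (hv : ‖v‖ = 1) (h0 : jv 0 = -(v 1)) (h1 : jv 1 = v 0) :
    w = (w 0 * v 0 + w 1 * v 1) • v + (w 1 * v 0 - w 0 * v 1) • jv := by
  have h := sq_sum_of_unit' hv
  ext i
  fin_cases i
  · show w 0 = _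
    simp only [PiLp.add_apply, PiLp.smul_apply, smul_eq_mul, h0, h1, Fin.isValue,
      Fin.mk_zero, Fin.mk_one]
    linear_combination (-(w 0)) * h
  · show w 1 = _
    simp only [PiLp.add_apply, PiLp.smul_apply, smul_eq_mul, h0, h1, Fin.isValue,
      Fin.mk_zero, Fin.mk_one]
    linear_combination (-(w 1)) * h

theorem stmt2 {n : ℕ} {T W : Type*}
    [NormedAddCommGroup T] [InnerProductSpace ℝ T] [FiniteDimensional ℝ T]
    [NormedAddCommGroup W] [InnerProductSpace ℝ W] [FiniteDimensional ℝ W]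
    (hT : Module.finrank ℝ T = n) (hW : Module.finrank ℝ W = n)
    (B : EuclideanSpace ℝ (Fin 2) →ₗ[ℝ] (T →ₗ[ℝ] W))
    (j : EuclideanSpace ℝ (Fin 2) → EuclideanSpace ℝ (Fin 2))
    (hj : ∀ v : EuclideanSpace ℝ (Fin 2), j v = ![-(v 1), v 0])
    (hLag : ∀ v : EuclideanSpace ℝ (Fin 2), ‖v‖ = 1 →
      (adjoint (B v)) ∘ₗ (B (j v)) = (adjoint (B (j v))) ∘ₗ (B v))
    (hIso : ∀ v : EuclideanSpace ℝ (Fin 2), ‖v‖ = 1 →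
      (adjoint (B v)) ∘ₗ (B v) + (adjoint (B (j v))) ∘ₗ (B (j v)) = LinearMap.id) :
    {v : EuclideanSpace ℝ (Fin 2) | ‖v‖ = 1 ∧ ¬ Function.Bijective (B v)}.Finite := by
  classical
  set S : Set (EuclideanSpace ℝ (Fin 2)) :=
    {v | ‖v‖ = 1 ∧ ¬ Function.Bijective (B v)} with hSdef
  by_contra hfin
  have hinf : S.Infinite := hfin
  -- components of j v
  have hj0 : ∀ v : EuclideanSpace ℝ (Fin 2), (j v) 0 = -(v 1) := by
    intro v; rw [hj v]; rfl
  have hj1 : ∀ v : EuclideanSpace ℝ (Fin 2), (j v) 1 = v 0 := by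
    intro v; rw [hj v]; rfl
  -- existence of unit kernel vectors
  have hker : ∀ v : EuclideanSpace ℝ (Fin 2), v ∈ S → ∃ X : T, ‖X‖ = 1 ∧ B v X = 0 := by
    intro v hv
    have hinj : ¬ Function.Injective (B v) := fun h =>
      hv.2 ⟨h, (LinearMap.injective_iff_surjective_of_finrank_eq_finrank
        (hT.trans hW.symm)).mp h⟩
    rw [← LinearMap.ker_eq_bot] at hinj
    obtain ⟨X, hXmem, hX0⟩ := Submodule.exists_mem_ne_zero_of_ne_bot hinj
    refine ⟨‖X‖⁻¹ • X, ?_, ?_⟩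
    · rw [norm_smul, norm_inv, norm_norm, inv_mul_cancel₀ (norm_ne_zero_iff.mpr hX0)]
    · rw [map_smul]
      rw [LinearMap.mem_ker] at hXmem
      rw [hXmem, smul_zero]
  -- key orthogonality
  have key : ∀ v w : EuclideanSpace ℝ (Fin 2), ‖v‖ = 1 → ‖w‖ = 1 →
      ∀ X Y : T, B v X = 0 → B w Y = 0 →
      (w 1 * v 0 - w 0 * v 1) ^ 2 * (inner ℝ X Y : ℝ) = 0 := by
    intro v w hv hw X Y hX hY
    set c : ℝ := w 0 * v 0 + w 1 * v 1 with hc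
    set s : ℝ := w 1 * v 0 - w 0 * v 1 with hs
    have hwd : w = c • v + s • j v := decomp' w hv (hj0 v) (hj1 v)
    have hBw : B w = c • B v + s • B (j v) := by
      rw [hwd, map_add, map_smul, map_smul]
    -- inner products with adjoints
    have e1 : (inner ℝ (B (j v) X) (B v Y) : ℝ) = 0 := by
      rw [← LinearMap.adjoint_inner_left]
      have := LinearMap.congr_fun (hLag v hv) X
      simp only [LinearMap.comp_apply] at this
      rw [this, hX, map_zero, inner_zero_left]
    have e2 : (inner ℝ (B (j v) X) (B (j v) Y) : ℝ) = (inner ℝ X Y : ℝ) := by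
      rw [← LinearMap.adjoint_inner_left]
      have := LinearMap.congr_fun (hIso v hv) X
      simp only [LinearMap.comp_apply, LinearMap.add_apply, LinearMap.id_apply] at this
      rw [hX, map_zero, zero_add] at this
      rw [this]
    have e0 : (inner ℝ (B w X) (B w Y) : ℝ) = 0 := by rw [hY, inner_zero_right]
    rw [hBw] at e0
    simp only [LinearMap.add_apply, LinearMap.smul_apply, hX, smul_zero, zero_add,
      inner_smul_left, inner_smul_right, inner_add_right, RCLike.star_def, starRingEnd_apply,
      star_trivial] at e0
    -- e0 : s * (c * inner (B (j v) X) (B v Y) + s * inner (B (j v) X) (B (j v) Y)) = 0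
    rw [e1, e2] at e0
    nlinarith [e0]
  -- nondegeneracy of s
  have hsne : ∀ v w : EuclideanSpace ℝ (Fin 2), ‖v‖ = 1 → ‖w‖ = 1 → w ≠ v → w ≠ -v →
      w 1 * v 0 - w 0 * v 1 ≠ 0 := by
    intro v w hv hw h1 h2 hs0
    have hv2 := sq_sum_of_unit' hv
    have hw2 := sq_sum_of_unit' hw
    set c : ℝ := w 0 * v 0 + w 1 * v 1 with hc
    have hwd : w = c • v + (w 1 * v 0 - w 0 * v 1) • j v :=
      decomp' w hv (hj0 v) (hj1 v)
    rw [hs0, zero_smul, add_zero] at hwd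
    have hc2 : c ^ 2 = 1 := by
      have : c ^ 2 + (w 1 * v 0 - w 0 * v 1) ^ 2 = 1 := by
        rw [hc]; nlinarith [hv2, hw2]
      rw [hs0] at this; linarith [this]
    rcases sq_eq_one_iff.mp hc2 with h | h
    · exact h1 (by rw [hwd, h, one_smul])
    · exact h2 (by rw [hwd, h, neg_one_smul])
  -- S is closed under negation
  have hSneg : ∀ v ∈ S, -v ∈ S := by
    intro v hv
    refine ⟨by simpa using hv.1, fun hb => hv.2 ?_⟩
    rw [map_neg] at hb
    have heq : ⇑(B v) = (fun y => -y) ∘ ⇑(-(B v)) := by funext x; simp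
    rw [heq]
    exact (neg_involutive : Function.Involutive (fun y : W => -y)).bijective.comp hb
  -- positivity predicate picking one representative of each pair {v, -v}
  set P : EuclideanSpace ℝ (Fin 2) → Prop :=
    fun v => 0 < v 0 ∨ (v 0 = 0 ∧ 0 < v 1) with hP
  have hm0 : ∀ v : EuclideanSpace ℝ (Fin 2), (-v) 0 = -(v 0) := fun v => rfl
  have hm1 : ∀ v : EuclideanSpace ℝ (Fin 2), (-v) 1 = -(v 1) := fun v => rfl
  have hPor : ∀ v : EuclideanSpace ℝ (Fin 2), ‖v‖ = 1 → P v ∨ P (-v) := by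
    intro v hv
    have h2 := sq_sum_of_unit' hv
    rcases lt_trichotomy (v 0) 0 with h | h | h
    · right; left; rw [hm0]; linarith
    · rcases lt_trichotomy (v 1) 0 with h' | h' | h'
      · right; right
        exact ⟨by rw [hm0, h, neg_zero], by rw [hm1]; linarith⟩
      · exfalso; rw [h, h'] at h2; norm_num at h2
      · left; right; exact ⟨h, h'⟩
    · left; left; exact h
  have hPnot : ∀ v : EuclideanSpace ℝ (Fin 2), ¬ (P v ∧ P (-v)) := by
    rintro v ⟨h1, h2⟩
    rw [hP] at h1 h2
    simp only [hm0, hm1] at h2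
    rcases h1 with h1 | ⟨h1a, h1b⟩ <;> rcases h2 with h2 | ⟨h2a, h2b⟩ <;> linarith
  set S' : Set (EuclideanSpace ℝ (Fin 2)) := {v ∈ S | P v} with hS'
  have hS'inf : S'.Infinite := by
    intro hfin'
    apply hinf
    have hsub : S ⊆ S' ∪ (Neg.neg '' S') := by
      intro v hv
      rcases hPor v hv.1 with h | h
      · exact Or.inl ⟨hv, h⟩
      · exact Or.inr ⟨-v, ⟨hSneg v hv, h⟩, neg_neg v⟩
    exact Set.Finite.subset (hfin'.union (hfin'.image _)) hsub
  choose X hX1 hX2 using hker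
  have horth : Orthonormal ℝ (fun v : S' => X v v.2.1) := by
    constructor
    · intro v; exact hX1 _ _
    · intro a b hab
      have hva : (a : EuclideanSpace ℝ (Fin 2)) ∈ S := a.2.1
      have hvb : (b : EuclideanSpace ℝ (Fin 2)) ∈ S := b.2.1
      have hne : (b : EuclideanSpace ℝ (Fin 2)) ≠ (a : EuclideanSpace ℝ (Fin 2)) :=
        fun h => hab (Subtype.ext h.symm)
      have hne2 : (b : EuclideanSpace ℝ (Fin 2)) ≠ -(a : EuclideanSpace ℝ (Fin 2)) := by
        intro h
        exact hPnot a ⟨a.2.2, h ▸ b.2.2⟩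
      have hs0 := hsne a b hva.1 hvb.1 hne hne2
      have hk := key a b hva.1 hvb.1 _ _ (hX2 _ hva) (hX2 _ hvb)
      exact (mul_eq_zero.mp hk).resolve_left (pow_ne_zero _ hs0)
  haveI : Finite S' := horth.linearIndependent.finite
  exact hS'inf (Set.toFinite S')
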